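/- Suppose ρ^AI is consistent with the Luce Alignment Model with parameters (u, v, α), let ρ ∈ {ρ^H, ρ^A} be one of the corresponding Luce rules (with utility u or v respectively), let x, y, z, t be four distinct alternatives in X, let S = {x,y,z,t} and T = {x,y}, and assume the cross instabilities Γ_{xy}(S',T|ρ^AI,ρ) are nonzero for every S' with T ⊆ S' ⊆ S. Then 1/Γ_{xy}(S,T|ρ^AI,ρ) + 1/Γ_{xy}(T,T|ρ^AI,ρ) = 1/Γ_{xy}(S∖{t},T|ρ^AI,ρ) + 1/Γ_{xy}(S∖{z},T|ρ^AI,ρ). -/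

import Mathlib

open Finset

/-- A stochastic choice function: values in `[0,1]`, positive only on the menu,
and summing to one over each nonempty menu. -/
def IsSCF {X : Type*} (ρ : X → Finset X → ℝ) : Prop :=
  ∀ S : Finset X, S.Nonempty →
    (∀ x, 0 ≤ ρ x S ∧ ρ x S ≤ 1) ∧ (∀ x, 0 < ρ x S → x ∈ S) ∧ (∑ x ∈ S, ρ x S) = 1

/-- Independence of Irrelevant Alternatives. -/
def IIA {X : Type*} [DecidableEq X] (ρ : X → Finset X → ℝ) : Prop :=
  ∀ S T : Finset X, S.Nonempty → T.Nonempty →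
    ∀ x ∈ S ∩ T, ∀ y ∈ S ∩ T, ρ x S * ρ y T = ρ x T * ρ y S

/-- Own instability `Δ_{xy}(S,T|ρ)`. -/
noncomputable def Delta {X : Type*} (ρ : X → Finset X → ℝ) (x y : X) (S T : Finset X) : ℝ :=
  ρ x S * ρ y T - ρ y S * ρ x T

/-- Cross instability `Γ_{xy}(S,T|ρ,ρ')`. -/
noncomputable def Gamma {X : Type*} (ρ ρ' : X → Finset X → ℝ) (x y : X) (S T : Finset X) : ℝ :=
  ρ x S * ρ' y T - ρ y S * ρ' x T

/-- Composite instability `Φ_{xy}(S,T|ρ,ρ')`. -/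
noncomputable def Phi {X : Type*} (ρ ρ' : X → Finset X → ℝ) (x y : X) (S T : Finset X) : ℝ :=
  Gamma ρ ρ' x y S T + Gamma ρ' ρ x y S T

/-- The Luce rule with utility `u`. -/
noncomputable def LuceRule {X : Type*} (u : X → ℝ) (x : X) (S : Finset X) : ℝ :=
  u x / ∑ y ∈ S, u y

/-- `ρAI` is consistent with the Luce Alignment Model with parameters `(u, v, α)`. -/
def LAM1 {X : Type*} (ρAI : X → Finset X → ℝ) (u v : X → ℝ) (α : ℝ) : Prop :=
  (∀ x, 0 < u x) ∧ (∀ x, 0 < v x) ∧ 0 ≤ α ∧ α ≤ 1 ∧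
    ∀ S : Finset X, S.Nonempty → ∀ x ∈ S,
      ρAI x S = α * (u x / ∑ y ∈ S, u y) + (1 - α) * (v x / ∑ y ∈ S, v y)

/-- The pair `(ρAI, ρH)` is consistent with the Luce Alignment Model
with parameters `(u, v, α)`. -/
def LAMpair {X : Type*} (ρAI ρH : X → Finset X → ℝ) (u v : X → ℝ) (α : ℝ) : Prop :=
  LAM1 ρAI u v α ∧
    ∀ S : Finset X, S.Nonempty → ∀ x ∈ S, ρH x S = u x / ∑ y ∈ S, u y


lemma gamma_u {X : Type*} [DecidableEq X] (ρAI : X → Finset X → ℝ)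
    (u v : X → ℝ) (α : ℝ) (hLAM : LAM1 ρAI u v α)
    (x y : X) (hxy : x ≠ y) (S' : Finset X) (hx : x ∈ S') (hy : y ∈ S') :
    Gamma ρAI (LuceRule u) x y S' {x, y}
      = (1 - α) * (v x * u y - v y * u x) / ((∑ a ∈ S', v a) * (u x + u y)) := by
  obtain ⟨hu, hv, _, _, hAI⟩ := hLAM
  have hS'ne : S'.Nonempty := ⟨x, hx⟩
  have hU : 0 < ∑ a ∈ S', u a := Finset.sum_pos (fun i _ => hu i) hS'ne
  have hV : 0 < ∑ a ∈ S', v a := Finset.sum_pos (fun i _ => hv i) hS'ne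
  have hTu : (0:ℝ) < u x + u y := add_pos (hu x) (hu y)
  unfold Gamma LuceRule
  rw [hAI S' hS'ne x hx, hAI S' hS'ne y hy, Finset.sum_pair hxy]
  field_simp
  ring

lemma gamma_v {X : Type*} [DecidableEq X] (ρAI : X → Finset X → ℝ)
    (u v : X → ℝ) (α : ℝ) (hLAM : LAM1 ρAI u v α)
    (x y : X) (hxy : x ≠ y) (S' : Finset X) (hx : x ∈ S') (hy : y ∈ S') :
    Gamma ρAI (LuceRule v) x y S' {x, y}
      = α * (u x * v y - u y * v x) / ((∑ a ∈ S', u a) * (v x + v y)) := by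
  obtain ⟨hu, hv, _, _, hAI⟩ := hLAM
  have hS'ne : S'.Nonempty := ⟨x, hx⟩
  have hU : 0 < ∑ a ∈ S', u a := Finset.sum_pos (fun i _ => hu i) hS'ne
  have hV : 0 < ∑ a ∈ S', v a := Finset.sum_pos (fun i _ => hv i) hS'ne
  have hTv : (0:ℝ) < v x + v y := add_pos (hv x) (hv y)
  unfold Gamma LuceRule
  rw [hAI S' hS'ne x hx, hAI S' hS'ne y hy, Finset.sum_pair hxy]
  field_simp
  ring

lemma recip_key {K Tu A B C D : ℝ} (hK : K ≠ 0) (h : A + B = C + D) :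
    1 / (K / (A * Tu)) + 1 / (K / (B * Tu))
      = 1 / (K / (C * Tu)) + 1 / (K / (D * Tu)) := by
  rw [one_div_div, one_div_div, one_div_div, one_div_div]
  rw [← add_div, ← add_div]
  congr 1
  linear_combination Tu * h


theorem lam_reciprocal_cross_instability {X : Type*} [Fintype X] [DecidableEq X]
    (hcard : 4 ≤ Fintype.card X)
    (ρAI : X → Finset X → ℝ) (u v : X → ℝ) (α : ℝ)
    (hLAM : LAM1 ρAI u v α)
    (ρ : X → Finset X → ℝ) (hρ : ρ = LuceRule u ∨ ρ = LuceRule v)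
    (x y z t : X) (hxy : x ≠ y) (hxz : x ≠ z) (hxt : x ≠ t)
    (hyz : y ≠ z) (hyt : y ≠ t) (hzt : z ≠ t)
    (hΓ : ∀ S' : Finset X, {x, y} ⊆ S' → S' ⊆ {x, y, z, t} →
      Gamma ρAI ρ x y S' {x, y} ≠ 0) :
    1 / Gamma ρAI ρ x y {x, y, z, t} {x, y} + 1 / Gamma ρAI ρ x y {x, y} {x, y}
      = 1 / Gamma ρAI ρ x y (({x, y, z, t} : Finset X) \ {t}) {x, y}
        + 1 / Gamma ρAI ρ x y (({x, y, z, t} : Finset X) \ {z}) {x, y} := by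
  have hS1 : (({x, y, z, t} : Finset X) \ {t}) = {x, y, z} := by
    ext a
    simp only [Finset.mem_sdiff, Finset.mem_insert, Finset.mem_singleton]
    constructor
    · rintro ⟨h1 | h1 | h1 | h1, h2⟩ <;> tauto
    · rintro (rfl | rfl | rfl) <;> tauto
  have hS2 : (({x, y, z, t} : Finset X) \ {z}) = {x, y, t} := by
    ext a
    simp only [Finset.mem_sdiff, Finset.mem_insert, Finset.mem_singleton]
    constructor
    · rintro ⟨h1 | h1 | h1 | h1, h2⟩ <;> tauto
    · rintro (rfl | rfl | rfl) <;> tauto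
  rw [hS1, hS2]
  have hxS : ∀ (S' : Finset X), x ∈ insert x S' := fun _ => Finset.mem_insert_self _ _
  have hyT : y ∈ ({x, y} : Finset X) := by simp
  have hyS : y ∈ ({x, y, z, t} : Finset X) := by simp
  have hyS1 : y ∈ ({x, y, z} : Finset X) := by simp
  have hyS2 : y ∈ ({x, y, t} : Finset X) := by simp
  have hTsubT : ({x, y} : Finset X) ⊆ {x, y} := subset_rfl
  have hTsub : ({x, y} : Finset X) ⊆ {x, y, z, t} := by
    intro a ha; simp at ha ⊢; tauto
  have hΓT := hΓ {x, y} hTsubT hTsub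
  -- sums over the four sets
  have sum4 : ∀ w : X → ℝ, (∑ a ∈ ({x, y, z, t} : Finset X), w a) = w x + w y + w z + w t := by
    intro w
    rw [Finset.sum_insert (by simp [hxy, hxz, hxt]),
        Finset.sum_insert (by simp [hyz, hyt]),
        Finset.sum_pair hzt]
    ring
  have sum3z : ∀ w : X → ℝ, (∑ a ∈ ({x, y, z} : Finset X), w a) = w x + w y + w z := by
    intro w
    rw [Finset.sum_insert (by simp [hxy, hxz]), Finset.sum_pair hyz]
    ring
  have sum3t : ∀ w : X → ℝ, (∑ a ∈ ({x, y, t} : Finset X), w a) = w x + w y + w t := by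
    intro w
    rw [Finset.sum_insert (by simp [hxy, hxt]), Finset.sum_pair hyt]
    ring
  have sum2 : ∀ w : X → ℝ, (∑ a ∈ ({x, y} : Finset X), w a) = w x + w y := fun w =>
    Finset.sum_pair hxy
  rcases hρ with rfl | rfl
  · have e4 := gamma_u ρAI u v α hLAM x y hxy {x, y, z, t} (hxS _) hyS
    have e2 := gamma_u ρAI u v α hLAM x y hxy {x, y} (hxS _) hyT
    have e3z := gamma_u ρAI u v α hLAM x y hxy {x, y, z} (hxS _) hyS1
    have e3t := gamma_u ρAI u v α hLAM x y hxy {x, y, t} (hxS _) hyS2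
    have hK : (1 - α) * (v x * u y - v y * u x) ≠ 0 := by
      intro h
      apply hΓT
      rw [e2, h, zero_div]
    rw [e4, e2, e3z, e3t, sum4 v, sum2 v, sum3z v, sum3t v]
    exact recip_key hK (by ring)
  · have e4 := gamma_v ρAI u v α hLAM x y hxy {x, y, z, t} (hxS _) hyS
    have e2 := gamma_v ρAI u v α hLAM x y hxy {x, y} (hxS _) hyT
    have e3z := gamma_v ρAI u v α hLAM x y hxy {x, y, z} (hxS _) hyS1
    have e3t := gamma_v ρAI u v α hLAM x y hxy {x, y, t} (hxS _) hyS2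
    have hK : α * (u x * v y - u y * v x) ≠ 0 := by
      intro h
      apply hΓT
      rw [e2, h, zero_div]
    rw [e4, e2, e3z, e3t, sum4 u, sum2 u, sum3z u, sum3t u]
    exact recip_key hK (by ring)
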